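/- arXiv:1602.02049 — 2 statements merged into one kernel-verified Lean document; each statement's English description precedes it below -/
import Mathlib

section
/- Let K be a field and F ∈ K[x]^{n×n} be nonsingular and column reduced, let U ∈ K[x]^{n×n} be the unimodular matrix with F·U = H the Hermite normal form of F, let s = (s_1,…,s_n) be the degrees of the diagonal entries of H, s_max = max_i s_i, and u = (s_max,…,s_max) ∈ ℤ^n. Then the 2n×n stacked matrix M = [U; H] is a [−u,−s]-minimal kernel basis of the n×2n matrix [F, −I_n]; in particular M is a kernel basis of [F, −I_n], all its [−u,−s]-column degrees equal 0, and M is [−u,−s]-column reduced. -/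
open Polynomial Matrix

variable {K : Type*} [Field K]

/-- The degree of a polynomial, as an element of `WithBot ℤ` (`⊥` for the zero polynomial). -/
noncomputable def degZ (p : Polynomial K) : WithBot ℤ :=
  p.degree.map fun n : ℕ => (n : ℤ)

/-- The shifted column degree `cdeg_u p = max_i (deg p_i + u_i)` of a vector of polynomials. -/
noncomputable def cdegS {m : Type*} [Fintype m] (u : m → ℤ) (p : m → Polynomial K) : WithBot ℤ :=
  Finset.univ.sup fun i => degZ (p i) + (u i : WithBot ℤ)

/-- The row degree of row `i` of a polynomial matrix. -/
noncomputable def rdeg {m n : Type*} [Fintype n] (P : Matrix m n (Polynomial K)) (i : m) :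
    WithBot ℕ :=
  Finset.univ.sup fun j => (P i j).degree

/-- The shifted leading coefficient matrix `lcoeff (x^u · A · x^{-v})`. -/
noncomputable def lcoeffS {m n : Type*} (u : m → ℤ) (A : Matrix m n (Polynomial K)) (v : n → ℤ) :
    Matrix m n K :=
  Matrix.of fun i j => if 0 ≤ v j - u i then (A i j).coeff (v j - u i).toNat else 0

/-- A matrix over `K` has full column rank if its columns are linearly independent over `K`. -/
def FullColRankK {m n : Type*} (M : Matrix m n K) : Prop :=
  LinearIndependent K fun j => fun i => M i j

/-- `A` is `u`-column reduced with `u`-column degrees `v`. -/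
def IsColReducedWith {m n : Type*} [Fintype m] (u : m → ℤ) (A : Matrix m n (Polynomial K))
    (v : n → ℤ) : Prop :=
  (∀ j, cdegS u (fun i => A i j) = (v j : WithBot ℤ)) ∧ FullColRankK (lcoeffS u A v)

/-- `A` is `u`-column reduced. -/
def IsColReducedS {m n : Type*} [Fintype m] (u : m → ℤ) (A : Matrix m n (Polynomial K)) : Prop :=
  ∃ v : n → ℤ, IsColReducedWith u A v

/-- `F` is column reduced with (ordinary) column degrees `d`. -/
def IsColReducedNat {m n : Type*} [Fintype m] (F : Matrix m n (Polynomial K)) (d : n → ℕ) : Prop :=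
  IsColReducedWith (fun _ => (0 : ℤ)) F (fun j => (d j : ℤ))

/-- `N` is a (right) kernel basis of `F`. -/
def IsKernelBasis {m n k : Type*} [Fintype n] [Fintype k] (F : Matrix m n (Polynomial K))
    (N : Matrix n k (Polynomial K)) : Prop :=
  (LinearIndependent (Polynomial K) fun j => fun i => N i j) ∧
  F * N = 0 ∧
  ∀ q : n → Polynomial K, F.mulVec q = 0 → ∃ p : k → Polynomial K, N.mulVec p = q

/-- `N` is an `s`-minimal kernel basis of `F`. -/
def IsMinimalKernelBasis {m n k : Type*} [Fintype n] [Fintype k] (F : Matrix m n (Polynomial K))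
    (s : n → ℤ) (N : Matrix n k (Polynomial K)) : Prop :=
  IsKernelBasis F N ∧ IsColReducedS s N

/-- `T` is a column basis of `F`. -/
def IsColBasis {m n r : Type*} [Fintype n] [Fintype r] (F : Matrix m n (Polynomial K))
    (T : Matrix m r (Polynomial K)) : Prop :=
  (LinearIndependent (Polynomial K) fun j => fun i => T i j) ∧
  ∀ q : m → Polynomial K, (∃ p, F.mulVec p = q) ↔ (∃ p, T.mulVec p = q)

/-- `H` is in (column) Hermite normal form. -/
def IsHermiteForm {n : ℕ} (H : Matrix (Fin n) (Fin n) (Polynomial K)) : Prop :=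
  (∀ i j : Fin n, i < j → H i j = 0) ∧
  (∀ i : Fin n, (H i i).Monic) ∧
  (∀ i j : Fin n, j < i → (H i j).degree < (H i i).degree)

/-- `H` is the Hermite normal form of `F`. -/
def IsHermiteFormOf {n : ℕ} (F H : Matrix (Fin n) (Fin n) (Polynomial K)) : Prop :=
  IsHermiteForm H ∧ ∃ U : Matrix (Fin n) (Fin n) (Polynomial K), IsUnit U.det ∧ F * U = H



lemma degZ_zero' : degZ (0 : Polynomial K) = ⊥ := by simp [degZ]

lemma degZ_of_ne_zero {p : Polynomial K} (hp : p ≠ 0) :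
    degZ p = ((p.natDegree : ℤ) : WithBot ℤ) := by
  rw [degZ, Polynomial.degree_eq_natDegree hp]; rfl

/-- Predictable degree property: if `F` is column reduced (data given explicitly), and all
entries of `F.mulVec p` have degree at most `t`, then every `deg p k + v k ≤ t`. -/
lemma predictable_degree {n : ℕ} (F : Matrix (Fin n) (Fin n) (Polynomial K)) (v : Fin n → ℤ)
    (hv : ∀ j, 0 ≤ v j)
    (hdeg : ∀ i j, degZ (F i j) ≤ (v j : WithBot ℤ))
    (hrank : FullColRankK (lcoeffS (fun _ => (0 : ℤ)) F v))
    (p : Fin n → Polynomial K) (t : ℕ)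
    (hFp : ∀ i, ((F.mulVec p) i).degree ≤ (t : WithBot ℕ)) :
    ∀ k, degZ (p k) + (v k : WithBot ℤ) ≤ ((t : ℤ) : WithBot ℤ) := by
  by_cases hp0 : ∀ k, p k = 0
  · intro k; simp [hp0 k, degZ_zero']
  push_neg at hp0
  obtain ⟨k₀, hk₀⟩ := hp0
  have hle : ∀ k, degZ (p k) + (v k : WithBot ℤ) ≤
      Finset.univ.sup (fun k => degZ (p k) + (v k : WithBot ℤ)) :=
    fun k => Finset.le_sup (f := fun k => degZ (p k) + (v k : WithBot ℤ)) (Finset.mem_univ k)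
  have hk0d : degZ (p k₀) + (v k₀ : WithBot ℤ) = ((p k₀).natDegree + v k₀ : ℤ) := by
    rw [degZ_of_ne_zero hk₀]; push_cast; ring_nf
  have hDbot : Finset.univ.sup (fun k => degZ (p k) + (v k : WithBot ℤ)) ≠ ⊥ := by
    intro h
    have h2 := hle k₀
    rw [h, le_bot_iff, hk0d] at h2
    exact (WithBot.coe_ne_bot) h2
  obtain ⟨d, hd⟩ := WithBot.ne_bot_iff_exists.mp hDbot
  rw [← hd] at hle
  -- 0 ≤ d
  have hd0 : 0 ≤ d := by
    have h2 := hle k₀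
    rw [hk0d] at h2
    have h3 : ((p k₀).natDegree : ℤ) + v k₀ ≤ d := by exact_mod_cast h2
    have h4 := Int.natCast_nonneg (p k₀).natDegree
    have h5 := hv k₀
    omega
  -- the coefficient vector
  set c : Fin n → K := fun j => if 0 ≤ d - v j then (p j).coeff (d - v j).toNat else 0 with hc
  -- claim 1 : coefficients of F.mulVec p at degree d.toNat
  have claim1 : ∀ i, ((F.mulVec p) i).coeff d.toNat =
      ∑ j, (lcoeffS (fun _ => (0 : ℤ)) F v) i j * c j := by
    intro i
    have : (F.mulVec p) i = ∑ j, F i j * p j := rfl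
    rw [this, Polynomial.finset_sum_coeff]
    refine Finset.sum_congr rfl (fun j _ => ?_)
    by_cases hpj : p j = 0
    · have hcj : c j = 0 := by
        show (if 0 ≤ d - v j then (p j).coeff (d - v j).toNat else 0) = 0
        split <;> simp [hpj]
      simp [hpj, hcj]
    · -- p j ≠ 0 : degree bookkeeping
      have hlej : degZ (p j) + (v j : WithBot ℤ) ≤ (d : WithBot ℤ) := hle j
      have hj2 : ((p j).natDegree : ℤ) + v j ≤ d := by
        rw [degZ_of_ne_zero hpj] at hlej
        exact_mod_cast hlej
      have hvd : v j ≤ d := by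
        have := Int.natCast_nonneg (p j).natDegree; omega
      have hcond : 0 ≤ d - v j := by omega
      have hFdeg : (F i j).natDegree ≤ (v j).toNat := by
        by_cases hF0 : F i j = 0
        · simp [hF0]
        · have := hdeg i j
          rw [degZ_of_ne_zero hF0] at this
          have : ((F i j).natDegree : ℤ) ≤ v j := by exact_mod_cast this
          omega
      have hpdeg : (p j).natDegree ≤ (d - v j).toNat := by omega
      have hsum : (v j).toNat + (d - v j).toNat = d.toNat := by
        have := hv j; omega
      rw [← hsum, Polynomial.coeff_mul_add_eq_of_natDegree_le hFdeg hpdeg]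
      have hlc : (lcoeffS (fun _ => (0 : ℤ)) F v) i j = (F i j).coeff (v j).toNat := by
        simp [lcoeffS, hv j]
      have hcj : c j = (p j).coeff (d - v j).toNat := by
        show (if 0 ≤ d - v j then (p j).coeff (d - v j).toNat else 0) = _
        rw [if_pos hcond]
      rw [hlc, hcj]
  -- claim 2 : c ≠ 0
  have hne : Nonempty (Fin n) := ⟨k₀⟩
  obtain ⟨k₁, -, hk₁⟩ := Finset.exists_mem_eq_sup Finset.univ
    (Finset.univ_nonempty) (fun k => degZ (p k) + (v k : WithBot ℤ))
  have hk₁d : degZ (p k₁) + (v k₁ : WithBot ℤ) = (d : WithBot ℤ) := by rw [← hk₁, ← hd]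
  have hpk₁ : p k₁ ≠ 0 := by
    intro h
    rw [h, degZ_zero'] at hk₁d
    simp at hk₁d
  have hnd : ((p k₁).natDegree : ℤ) + v k₁ = d := by
    rw [degZ_of_ne_zero hpk₁] at hk₁d
    exact_mod_cast hk₁d
  have hck₁ : c k₁ = (p k₁).leadingCoeff := by
    have h4 := Int.natCast_nonneg (p k₁).natDegree
    have h2 : 0 ≤ d - v k₁ := by omega
    have h1 : (d - v k₁).toNat = (p k₁).natDegree := by omega
    show (if 0 ≤ d - v k₁ then (p k₁).coeff (d - v k₁).toNat else 0) = _
    rw [if_pos h2, h1]; rfl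
  have hcne : c ≠ 0 := by
    intro h
    apply Polynomial.leadingCoeff_ne_zero.mpr hpk₁
    rw [← hck₁, h]; rfl
  -- claim 3 : some row of lcoeff·c is nonzero
  have claim3 : ∃ i, ∑ j, (lcoeffS (fun _ => (0 : ℤ)) F v) i j * c j ≠ 0 := by
    by_contra hall
    push_neg at hall
    have hz : ∑ j, c j • (fun i => (lcoeffS (fun _ => (0 : ℤ)) F v) i j) = 0 := by
      funext i
      have h := hall i
      simpa [Finset.sum_apply, mul_comm] using h
    exact hcne (funext (Fintype.linearIndependent_iff.mp hrank c hz))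
  obtain ⟨i, hi⟩ := claim3
  have hco : ((F.mulVec p) i).coeff d.toNat ≠ 0 := by rw [claim1 i]; exact hi
  have hdle : (d.toNat : WithBot ℕ) ≤ (t : WithBot ℕ) :=
    le_trans (Polynomial.le_degree_of_ne_zero hco) (hFp i)
  have hdt : d ≤ (t : ℤ) := by
    have : d.toNat ≤ t := by exact_mod_cast hdle
    omega
  intro k
  exact le_trans (hle k) (by exact_mod_cast hdt)

lemma degZ_le_coe_iff {p : Polynomial K} {t : ℕ} :
    degZ p ≤ ((t : ℤ) : WithBot ℤ) ↔ p.degree ≤ (t : WithBot ℕ) := by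
  by_cases hp : p = 0
  · simp [hp, degZ_zero']
  · rw [degZ_of_ne_zero hp, Polynomial.degree_eq_natDegree hp]
    constructor
    · intro h
      have : (p.natDegree : ℤ) ≤ t := by exact_mod_cast h
      exact_mod_cast this
    · intro h
      have : p.natDegree ≤ t := by exact_mod_cast h
      exact_mod_cast this

lemma degZ_add_neg_le {p : Polynomial K} {a b : ℕ} (h : p.degree ≤ (a : WithBot ℕ))
    (hab : a ≤ b) :
    degZ p + ((-(b : ℤ) : ℤ) : WithBot ℤ) ≤ (0 : WithBot ℤ) := by
  by_cases hp : p = 0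
  · simp [hp, degZ_zero']
  · rw [degZ_of_ne_zero hp]
    have h1 : p.natDegree ≤ a := by
      rw [Polynomial.degree_eq_natDegree hp] at h; exact_mod_cast h
    have h2 : ((p.natDegree : ℤ) + (-(b : ℤ)) : ℤ) ≤ 0 := by omega
    exact_mod_cast h2

/-- the stacked matrix `M = [U; H]`, where `F·U = H` is the Hermite normal
form of `F`, is a `[-u,-s]`-minimal kernel basis of `[F, -I]`; in particular it is a kernel
basis, all its `[-u,-s]`-column degrees equal `0`, and it is `[-u,-s]`-column reduced. -/
theorem stacked_unimodular_hermite_is_minimal_kernel_basis {n : ℕ}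
    (F U H : Matrix (Fin n) (Fin n) (Polynomial K))
    (hFns : F.det ≠ 0) (hFcr : IsColReducedS (fun _ => (0 : ℤ)) F)
    (hU : IsUnit U.det) (hFU : F * U = H) (hHf : IsHermiteForm H)
    (s : Fin n → ℕ) (hs : ∀ i, s i = (H i i).natDegree)
    (smax : ℕ) (hsmax : smax = Finset.univ.sup s) :
    IsMinimalKernelBasis (fromCols F (-1))
      (Sum.elim (fun _ : Fin n => -(smax : ℤ)) (fun i => -(s i : ℤ)))
      (fromRows U H) ∧
    (∀ j : Fin n, cdegS (Sum.elim (fun _ : Fin n => -(smax : ℤ)) (fun i => -(s i : ℤ)))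
      (fun i => fromRows U H i j) = (0 : WithBot ℤ)) ∧
    IsColReducedS (Sum.elim (fun _ : Fin n => -(smax : ℤ)) (fun i => -(s i : ℤ)))
      (fromRows U H) := by
  obtain ⟨hHtri, hHmon, hHdom⟩ := hHf
  obtain ⟨v, hcd, hrank⟩ := hFcr
  -- degrees of entries of H
  have hHii_ne : ∀ i, H i i ≠ 0 := fun i => (hHmon i).ne_zero
  have hHii : ∀ i, (H i i).degree = ((s i : ℕ) : WithBot ℕ) := by
    intro i; rw [Polynomial.degree_eq_natDegree (hHii_ne i), hs i]
  have hHle : ∀ i j, (H i j).degree ≤ ((s i : ℕ) : WithBot ℕ) := by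
    intro i j
    rcases lt_trichotomy i j with h | h | h
    · rw [hHtri i j h]; simp
    · rw [h]; exact le_of_eq (hHii j)
    · exact le_of_lt ((hHii i) ▸ hHdom i j h)
  have hsle : ∀ i, s i ≤ smax := fun i => hsmax ▸ Finset.le_sup (Finset.mem_univ i)
  have hHsmax : ∀ i j, (H i j).degree ≤ ((smax : ℕ) : WithBot ℕ) := by
    intro i j
    refine (hHle i j).trans ?_
    exact_mod_cast hsle i
  -- entry degree bounds for F
  have hdegF : ∀ i j, degZ (F i j) ≤ (v j : WithBot ℤ) := by
    intro i j
    have h2 : cdegS (fun _ => (0 : ℤ)) (fun i => F i j) = (v j : WithBot ℤ) := hcd j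
    rw [cdegS] at h2
    have h := Finset.le_sup (f := fun i => degZ (F i j) + (((0 : ℤ) : ℤ) : WithBot ℤ))
      (Finset.mem_univ i)
    rw [h2] at h
    simpa using h
  have hcol : ∀ j, ∃ i, F i j ≠ 0 := by
    intro j
    by_contra h
    push_neg at h
    exact hFns (Matrix.det_eq_zero_of_column_eq_zero j h)
  have hv : ∀ j, 0 ≤ v j := by
    intro j
    obtain ⟨i, hi⟩ := hcol j
    have h := hdegF i j
    rw [degZ_of_ne_zero hi] at h
    have : ((F i j).natDegree : ℤ) ≤ v j := by exact_mod_cast h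
    have := Int.natCast_nonneg (F i j).natDegree
    omega
  -- degree bound for U via predictable degree property
  have hUdeg : ∀ i j, (U i j).degree ≤ ((smax : ℕ) : WithBot ℕ) := by
    intro k j
    have hFp : ∀ i, ((F.mulVec fun k => U k j) i).degree ≤ ((smax : ℕ) : WithBot ℕ) := by
      intro i
      have : (F.mulVec fun k => U k j) i = H i j := by
        rw [← hFU, Matrix.mul_apply]; rfl
      rw [this]; exact hHsmax i j
    have h := predictable_degree F v hv hdegF hrank (fun k => U k j) smax hFp k
    have h2 : degZ (U k j) ≤ ((smax : ℤ) : WithBot ℤ) := by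
      by_cases hUz : U k j = 0
      · simp [hUz, degZ_zero']
      · rw [degZ_of_ne_zero hUz] at h ⊢
        have h3 : ((U k j).natDegree : ℤ) + v k ≤ (smax : ℤ) := by exact_mod_cast h
        have h4 := hv k
        have : ((U k j).natDegree : ℤ) ≤ (smax : ℤ) := by omega
        exact_mod_cast this
    exact degZ_le_coe_iff.mp h2
  -- Part 2 : all shifted column degrees are 0
  have part2 : ∀ j : Fin n,
      cdegS (Sum.elim (fun _ : Fin n => -(smax : ℤ)) (fun i => -(s i : ℤ)))
        (fun i => fromRows U H i j) = (0 : WithBot ℤ) := by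
    intro j
    rw [cdegS]
    apply le_antisymm
    · apply Finset.sup_le
      rintro (i | i) -
      · rw [Matrix.fromRows_apply_inl]
        exact degZ_add_neg_le (hUdeg i j) le_rfl
      · rw [Matrix.fromRows_apply_inr]
        exact degZ_add_neg_le (hHle i j) le_rfl
    · have h := Finset.le_sup (f := fun i => degZ (fromRows U H i j) +
        ((Sum.elim (fun _ : Fin n => -(smax : ℤ)) (fun i => -(s i : ℤ)) i : ℤ) : WithBot ℤ))
        (Finset.mem_univ (Sum.inr j : Fin n ⊕ Fin n))
      refine le_trans ?_ h
      simp only [Matrix.fromRows_apply_inr, Sum.elim_inr, degZ_of_ne_zero (hHii_ne j), hs j,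
        ← WithBot.coe_add]
      simp
  -- the shifted leading coefficient matrix
  set w : Fin n ⊕ Fin n → ℤ := Sum.elim (fun _ : Fin n => -(smax : ℤ)) (fun i => -(s i : ℤ)) with hw
  have hbot : ∀ i j : Fin n,
      (lcoeffS w (fromRows U H) (fun _ => (0 : ℤ))) (Sum.inr i) j = if i = j then 1 else 0 := by
    intro i j
    have hwi : w (Sum.inr i) = -(s i : ℤ) := rfl
    have hcond : (0 : ℤ) ≤ (0 : ℤ) - w (Sum.inr i) := by rw [hwi]; omega
    have htn : ((0 : ℤ) - w (Sum.inr i)).toNat = s i := by rw [hwi]; omega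
    have : (lcoeffS w (fromRows U H) (fun _ => (0 : ℤ))) (Sum.inr i) j
        = (H i j).coeff (s i) := by
      show (if (0:ℤ) ≤ (0:ℤ) - w (Sum.inr i) then
        (fromRows U H (Sum.inr i) j).coeff ((0:ℤ) - w (Sum.inr i)).toNat else 0) = _
      rw [if_pos hcond, htn, Matrix.fromRows_apply_inr]
    rw [this]
    rcases lt_trichotomy i j with h | h | h
    · rw [hHtri i j h, if_neg (ne_of_lt h)]; simp
    · rw [h, if_pos rfl, hs j]
      exact (hHmon j).coeff_natDegree
    · rw [if_neg (ne_of_gt h)]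
      apply Polynomial.coeff_eq_zero_of_degree_lt
      calc (H i j).degree < (H i i).degree := hHdom i j h
        _ = ((s i : ℕ) : WithBot ℕ) := hHii i
  have hrank2 : FullColRankK (lcoeffS w (fromRows U H) (fun _ => (0 : ℤ))) := by
    rw [FullColRankK]
    rw [Fintype.linearIndependent_iff]
    intro g hg j
    have h := congrFun hg (Sum.inr j)
    simp only [Finset.sum_apply, Pi.smul_apply, smul_eq_mul, Pi.zero_apply] at h
    rw [Finset.sum_congr rfl (fun k _ => by rw [hbot j k])] at h
    simpa using h
  -- kernel basis
  have hUinv : U⁻¹ * U = 1 := Matrix.nonsing_inv_mul U hU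
  have hUinv' : U * U⁻¹ = 1 := Matrix.mul_nonsing_inv U hU
  have hmul0 : fromCols F (-1 : Matrix (Fin n) (Fin n) (Polynomial K)) * fromRows U H = 0 := by
    rw [Matrix.fromCols_mul_fromRows, hFU]
    simp
  have hlinind : LinearIndependent (Polynomial K)
      fun j => fun i => fromRows U H i j := by
    rw [Fintype.linearIndependent_iff]
    intro g hg
    have hUg : U.mulVec g = 0 := by
      funext i
      have h := congrFun hg (Sum.inl i)
      simp only [Finset.sum_apply, Pi.smul_apply, smul_eq_mul, Pi.zero_apply,
        Matrix.fromRows_apply_inl] at h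
      simp only [Matrix.mulVec, dotProduct, Pi.zero_apply]
      rw [Finset.sum_congr rfl (fun k _ => mul_comm (U i k) (g k))]
      exact h
    have hgz : g = 0 := by
      have h2 := congrArg (fun x => U⁻¹.mulVec x) hUg
      simpa [Matrix.mulVec_mulVec, hUinv] using h2
    exact fun j => congrFun hgz j
  have hspan : ∀ q : (Fin n ⊕ Fin n) → Polynomial K,
      (fromCols F (-1 : Matrix (Fin n) (Fin n) (Polynomial K))).mulVec q = 0 →
      ∃ p : Fin n → Polynomial K, (fromRows U H).mulVec p = q := by
    intro q hq
    have hqelim : fromCols F (-1 : Matrix (Fin n) (Fin n) (Polynomial K)) *ᵥ Sum.elim (q ∘ Sum.inl) (q ∘ Sum.inr) = 0 := by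
      rw [Sum.elim_comp_inl_inr]; exact hq
    rw [Matrix.fromCols_mulVec_sumElim] at hqelim
    have hFq : F.mulVec (q ∘ Sum.inl) = q ∘ Sum.inr := by
      have : F *ᵥ (q ∘ Sum.inl) + -(q ∘ Sum.inr) = 0 := by
        rw [← hqelim]
        congr 1
        rw [Matrix.neg_mulVec, Matrix.one_mulVec]
      have h2 := congrArg (fun x => x + (q ∘ Sum.inr)) this
      simpa [add_assoc] using h2
    refine ⟨U⁻¹.mulVec (q ∘ Sum.inl), ?_⟩
    have hUp : U.mulVec (U⁻¹.mulVec (q ∘ Sum.inl)) = q ∘ Sum.inl := by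
      rw [Matrix.mulVec_mulVec, hUinv', Matrix.one_mulVec]
    have hHp : H.mulVec (U⁻¹.mulVec (q ∘ Sum.inl)) = q ∘ Sum.inr := by
      rw [← hFU, ← Matrix.mulVec_mulVec, hUp, hFq]
    rw [Matrix.fromRows_mulVec, hUp, hHp]
    exact Sum.elim_comp_inl_inr q
  have hkb : IsKernelBasis (fromCols F (-1 : Matrix (Fin n) (Fin n) (Polynomial K))) (fromRows U H) := ⟨hlinind, hmul0, hspan⟩
  have hcr : IsColReducedS w (fromRows U H) := by
    refine ⟨fun _ => 0, fun j => ?_, hrank2⟩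
    rw [part2 j]
    simp
  exact ⟨⟨hkb, hcr⟩, part2, hcr⟩
end

section
/- Let K be a field and F ∈ K[x]^{n×n} be nonsingular and column reduced with column degrees d = (d_1,…,d_n), and let U ∈ K[x]^{n×n} be the unimodular matrix with F·U = H the Hermite normal form of F. Let s_max be the maximal degree of a diagonal entry of H. Then the entries of U satisfy deg u_ij ≤ s_max − d_i for all i, j; in particular every entry of U has degree at most s_max. -/
open Polynomial Matrix

variable {K : Type*} [Field K]

lemma coeff_mul_single' {p q : Polynomial K} {dd t : ℕ}
    (hp : p.degree ≤ (dd : WithBot ℕ)) (hq : q.natDegree + dd ≤ t) :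
    (p * q).coeff t = p.coeff dd * q.coeff (t - dd) := by
  rw [Polynomial.coeff_mul]
  refine Finset.sum_eq_single_of_mem (dd, t - dd)
    (Finset.HasAntidiagonal.mem_antidiagonal.mpr (by omega)) ?_
  rintro ⟨a, b⟩ hab hne
  rw [Finset.HasAntidiagonal.mem_antidiagonal] at hab
  simp only at hab
  rcases lt_trichotomy a dd with h | h | h
  · have hb : q.natDegree < b := by omega
    rw [Polynomial.coeff_eq_zero_of_natDegree_lt hb, mul_zero]
  · exact absurd (by simp only [Prod.mk.injEq]; omega) hne
  · rw [Polynomial.coeff_eq_zero_of_degree_lt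
      (lt_of_le_of_lt hp (by exact_mod_cast h)), zero_mul]

lemma degZ_eq_natDegree {p : Polynomial K} (hp : p ≠ 0) :
    degZ p = (((p.natDegree : ℤ)) : WithBot ℤ) := by
  unfold degZ
  rw [Polynomial.degree_eq_natDegree hp]
  rfl

lemma degree_le_of_degZ_le {p : Polynomial K} {m : ℕ}
    (h : degZ p ≤ (((m : ℤ)) : WithBot ℤ)) : p.degree ≤ (m : WithBot ℕ) := by
  by_cases hp : p = 0
  · simp [hp]
  · rw [degZ_eq_natDegree hp] at h
    have h1 : (p.natDegree : ℤ) ≤ (m : ℤ) := by exact_mod_cast h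
    have h2 : p.natDegree ≤ m := by exact_mod_cast h1
    exact (Polynomial.degree_le_natDegree).trans (by exact_mod_cast h2)

lemma key_predictable {n : ℕ} (F : Matrix (Fin n) (Fin n) (Polynomial K)) (d : Fin n → ℕ)
    (hdeg : ∀ i j, (F i j).degree ≤ ((d j : ℕ) : WithBot ℕ))
    (hli : FullColRankK (Matrix.of fun i j => (F i j).coeff (d j)))
    (u : Fin n → Polynomial K) (t : ℕ)
    (htle : ∀ k, u k ≠ 0 → (u k).natDegree + d k ≤ t)
    (k0 : Fin n) (hk0 : u k0 ≠ 0) (hk0t : (u k0).natDegree + d k0 = t) :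
    ∃ i, (∑ k, F i k * u k).coeff t ≠ 0 := by
  set c : Fin n → K := fun k => (u k).coeff (t - d k) with hc
  have hck0 : c k0 ≠ 0 := by
    have ht : t - d k0 = (u k0).natDegree := by omega
    have : c k0 = (u k0).leadingCoeff := by rw [hc]; simp only [ht]; rfl
    rw [this]
    exact Polynomial.leadingCoeff_ne_zero.mpr hk0
  have hcoeff : ∀ i, (∑ k, F i k * u k).coeff t = ∑ k, (F i k).coeff (d k) * c k := by
    intro i
    rw [Polynomial.finset_sum_coeff]
    refine Finset.sum_congr rfl fun k _ => ?_
    by_cases hk : u k = 0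
    · simp [hk, hc]
    · exact coeff_mul_single' (hdeg i k) (htle k hk)
  by_contra hcon
  push_neg at hcon
  apply hck0
  refine Fintype.linearIndependent_iff.mp hli c ?_ k0
  funext i
  have h0 := hcon i
  rw [hcoeff i] at h0
  simp only [Finset.sum_apply, Pi.smul_apply, smul_eq_mul, Pi.zero_apply, Matrix.of_apply]
  rw [← h0]
  exact Finset.sum_congr rfl fun k _ => mul_comm _ _

/-- for a column reduced `F` with column degrees `d` and `F·U = H` its
Hermite normal form, the entries of the unimodular multiplier satisfy
`deg u_ij ≤ s_max - d_i`; in particular `deg u_ij ≤ s_max`. -/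
theorem unimodular_multiplier_degree_bound {n : ℕ}
    (F U H : Matrix (Fin n) (Fin n) (Polynomial K)) (d : Fin n → ℕ)
    (hFns : F.det ≠ 0) (hFcr : IsColReducedNat F d)
    (hU : IsUnit U.det) (hFU : F * U = H) (hHf : IsHermiteForm H)
    (smax : ℕ) (hsmax : smax = Finset.univ.sup fun i => (H i i).natDegree) :
    (∀ i j : Fin n, degZ (U i j) ≤ (((smax : ℤ) - (d i : ℤ) : ℤ) : WithBot ℤ)) ∧
    (∀ i j : Fin n, (U i j).degree ≤ (smax : WithBot ℕ)) := by
  obtain ⟨hcd, hfr⟩ := hFcr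
  -- entry degree bound on F
  have hdeg : ∀ i j, (F i j).degree ≤ ((d j : ℕ) : WithBot ℕ) := by
    intro i j
    apply degree_le_of_degZ_le
    have h1 : degZ (F i j) + (((0 : ℤ)) : WithBot ℤ) ≤ cdegS (fun _ => (0 : ℤ)) (fun i => F i j) := by
      exact Finset.le_sup (f := fun i => degZ (F i j) + (((0 : ℤ)) : WithBot ℤ)) (Finset.mem_univ i)
    rw [hcd j] at h1
    simpa using h1
  -- leading coefficient matrix
  have hli : FullColRankK (Matrix.of fun i j => (F i j).coeff (d j)) := by
    have heq : lcoeffS (fun _ => (0 : ℤ)) F (fun j => (d j : ℤ)) =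
        Matrix.of fun i j => (F i j).coeff (d j) := by
      ext i j
      simp [lcoeffS]
    rw [← heq]; exact hfr
  -- degrees of entries of H are at most smax
  have hHd : ∀ i j, (H i j).degree ≤ (smax : WithBot ℕ) := by
    have hdiag : ∀ i : Fin n, (H i i).degree ≤ (smax : WithBot ℕ) := by
      intro i
      rw [Polynomial.degree_eq_natDegree (hHf.2.1 i).ne_zero]
      exact_mod_cast Nat.cast_le.mpr
        (hsmax ▸ Finset.le_sup (f := fun i => (H i i).natDegree) (Finset.mem_univ i))
    intro i j
    rcases lt_trichotomy i j with h | h | h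
    · rw [hHf.1 i j h]; simp
    · subst h; exact hdiag i
    · exact (le_of_lt (hHf.2.2 i j h)).trans (hdiag i)
  -- main claim
  have hmain : ∀ i j : Fin n, U i j ≠ 0 → (U i j).natDegree + d i ≤ smax := by
    intro i j hij
    classical
    set u : Fin n → Polynomial K := fun k => U k j with hu
    set s : Finset (Fin n) := Finset.univ.filter (fun k => u k ≠ 0) with hs
    have hi : i ∈ s := Finset.mem_filter.mpr ⟨Finset.mem_univ i, hij⟩
    set t := s.sup (fun k => (u k).natDegree + d k) with htdef
    obtain ⟨k0, hk0s, hk0⟩ := Finset.exists_mem_eq_sup s ⟨i, hi⟩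
      (fun k => (u k).natDegree + d k)
    have hk0ne : u k0 ≠ 0 := (Finset.mem_filter.mp hk0s).2
    have htle : ∀ k, u k ≠ 0 → (u k).natDegree + d k ≤ t := by
      intro k hk
      exact Finset.le_sup (f := fun k => (u k).natDegree + d k) (Finset.mem_filter.mpr ⟨Finset.mem_univ k, hk⟩)
    obtain ⟨i', hi'⟩ := key_predictable F d hdeg hli u t htle k0 hk0ne hk0.symm
    have hH : (∑ k, F i' k * u k) = H i' j := by
      rw [← hFU, Matrix.mul_apply]
    have hle : (t : WithBot ℕ) ≤ (H i' j).degree :=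
      Polynomial.le_degree_of_ne_zero (hH ▸ hi')
    have ht2 : (t : WithBot ℕ) ≤ (smax : WithBot ℕ) := hle.trans (hHd i' j)
    have ht3 : t ≤ smax := by exact_mod_cast ht2
    exact le_trans (htle i hij) ht3
  constructor
  · intro i j
    by_cases h : U i j = 0
    · simp [degZ, h]
    · rw [degZ_eq_natDegree h]
      have hb := hmain i j h
      have : (U i j).natDegree ≤ (smax : ℤ) - (d i : ℤ) := by omega
      exact_mod_cast this
  · intro i j
    by_cases h : U i j = 0
    · simp [h]
    · have hb := hmain i j h
      have : (U i j).natDegree ≤ smax := by omega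
      exact (Polynomial.degree_le_natDegree).trans (by exact_mod_cast this)
end
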